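/- Let Z ⊂ ℝⁿ be a compact convex set and y an element of Z not in the algebraic boundary ∂Z (i.e., every x ∈ Z appears with nonzero weight in some convex decomposition of y). Then there exists an extreme point x of Z such that b(y) = t_y(x), where b(y) = inf_{x ∈ Z} t_y(x) is the boundariness. -/

import Mathlib

/-- The weight function `t_y(x) = sup{ t ∈ [0,1) : (y - t·x)/(1-t) ∈ Z }`. -/
noncomputable def weight {V : Type*} [AddCommGroup V] [Module ℝ V] (Z : Set V) (y x : V) : ℝ :=
  sSup {t : ℝ | 0 ≤ t ∧ t < 1 ∧ (1 - t)⁻¹ • (y - t • x) ∈ Z}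

/-- The boundariness `b(y) = inf_{x ∈ Z} t_y(x)`. -/
noncomputable def bdness {V : Type*} [AddCommGroup V] [Module ℝ V] (Z : Set V) (y : V) : ℝ :=
  sInf (weight Z y '' Z)

open Set Metric Module RealInnerProductSpace

namespace BD

variable {n : ℕ}

local notation "V" => EuclideanSpace ℝ (Fin n)

def wset (Z : Set V) (y x : V) : Set ℝ := {t : ℝ | 0 ≤ t ∧ t < 1 ∧ (1 - t)⁻¹ • (y - t • x) ∈ Z}

lemma weight_eq (Z : Set V) (y x : V) : weight Z y x = sSup (wset Z y x) := rfl

lemma zero_mem_wset {Z : Set V} {y : V} (hy : y ∈ Z) (x : V) : (0:ℝ) ∈ wset Z y x := by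
  refine ⟨le_refl _, one_pos, ?_⟩
  simpa using hy

lemma bddAbove_wset (Z : Set V) (y x : V) : BddAbove (wset Z y x) :=
  ⟨1, fun t ht => le_of_lt ht.2.1⟩

lemma weight_nonneg {Z : Set V} {y : V} (hy : y ∈ Z) (x : V) : 0 ≤ weight Z y x :=
  le_csSup (bddAbove_wset Z y x) (zero_mem_wset hy x)

lemma weight_le_one {Z : Set V} {y : V} (hy : y ∈ Z) (x : V) : weight Z y x ≤ 1 :=
  csSup_le ⟨0, zero_mem_wset hy x⟩ (fun t ht => le_of_lt ht.2.1)

lemma wset_down {Z : Set V} (hconv : Convex ℝ Z) {y x : V} (hx : x ∈ Z) {s t : ℝ}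
    (hs : s ∈ wset Z y x) (h0 : 0 ≤ t) (hts : t ≤ s) : t ∈ wset Z y x := by
  obtain ⟨hs0, hs1, hsz⟩ := hs
  refine ⟨h0, lt_of_le_of_lt hts hs1, ?_⟩
  have h1t : (0:ℝ) < 1 - t := by linarith
  have h1s : (0:ℝ) < 1 - s := by linarith
  have key : (1 - t)⁻¹ • (y - t • x)
      = ((s - t)/(1 - t)) • x + ((1 - s)/(1 - t)) • ((1 - s)⁻¹ • (y - s • x)) := by
    match_scalars <;> (field_simp; try ring)
  rw [key]
  exact hconv hx hsz (div_nonneg (by linarith) h1t.le) (div_nonneg (by linarith) h1t.le)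
    (by field_simp; ring)

lemma lt_weight_mem {Z : Set V} (hconv : Convex ℝ Z) {y x : V} (hx : x ∈ Z) {t : ℝ}
    (h0 : 0 ≤ t) (ht : t < weight Z y x) : t ∈ wset Z y x := by
  have hne : (wset Z y x).Nonempty := by
    by_contra h
    rw [Set.not_nonempty_iff_eq_empty] at h
    rw [weight_eq, h, Real.sSup_empty] at ht
    linarith
  obtain ⟨s, hs, hts⟩ := exists_lt_of_lt_csSup hne (weight_eq Z y x ▸ ht)
  exact wset_down hconv hx hs h0 (le_of_lt hts)

lemma weight_lt_one {Z : Set V} (hcomp : IsCompact Z) {y x : V} (hy : y ∈ Z)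
    (hxy : x ≠ y) : weight Z y x < 1 := by
  obtain ⟨R, hR⟩ := hcomp.isBounded.subset_closedBall 0
  set C : ℝ := |R| + ‖x‖ + 1 with hC
  have hCpos : 0 < C := by positivity
  have hd : 0 < ‖y - x‖ := by
    simp only [norm_pos_iff, sub_ne_zero]; exact hxy.symm
  have key : ∀ t ∈ wset Z y x, t ≤ 1 - ‖y - x‖ / C := by
    rintro t ⟨h0, h1, hz⟩
    have h1t : (0:ℝ) < 1 - t := by linarith
    have hzb : ‖(1 - t)⁻¹ • (y - t • x)‖ ≤ |R| := by
      have := hR hz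
      simp only [Metric.mem_closedBall, dist_zero_right] at this
      exact le_trans this (le_abs_self R)
    have h2 : ‖y - t • x‖ ≤ (1 - t) * |R| := by
      have : ‖y - t • x‖ = (1 - t) * ‖(1 - t)⁻¹ • (y - t • x)‖ := by
        rw [norm_smul, norm_inv, Real.norm_eq_abs, abs_of_pos h1t]
        field_simp
      rw [this]
      exact mul_le_mul_of_nonneg_left hzb (le_of_lt h1t)
    have h3 : ‖y - x‖ ≤ ‖y - t • x‖ + (1 - t) * ‖x‖ := by
      have : y - x = (y - t • x) - (1 - t) • x := by module
      rw [this]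
      refine le_trans (norm_sub_le _ _) ?_
      rw [norm_smul, Real.norm_eq_abs, abs_of_pos h1t]
    have h4 : ‖y - x‖ ≤ (1 - t) * C := by
      rw [hC]; nlinarith [norm_nonneg x]
    have h5 : ‖y - x‖ / C ≤ 1 - t := (div_le_iff₀ hCpos).2 (by nlinarith)
    linarith
  have hle : weight Z y x ≤ 1 - ‖y - x‖ / C := by
    rw [weight_eq]; exact csSup_le ⟨0, zero_mem_wset hy x⟩ key
  have hpos : 0 < ‖y - x‖ / C := by positivity
  linarith

lemma weight_attain {Z : Set V} (hconv : Convex ℝ Z) (hcomp : IsCompact Z) {y x : V}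
    (hy : y ∈ Z) (hx : x ∈ Z) (hlt : weight Z y x < 1) :
    (1 - weight Z y x)⁻¹ • (y - weight Z y x • x) ∈ Z := by
  set w := weight Z y x with hw
  have hw0 : 0 ≤ w := weight_nonneg hy x
  obtain ⟨u, hmono, htend, hmem⟩ :=
    exists_seq_tendsto_sSup (⟨0, zero_mem_wset hy x⟩ : (wset Z y x).Nonempty)
      (bddAbove_wset Z y x)
  rw [← weight_eq, ← hw] at htend
  have hcont : Filter.Tendsto (fun k => (1 - u k)⁻¹ • (y - u k • x)) Filter.atTop
      (nhds ((1 - w)⁻¹ • (y - w • x))) := by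
    refine Filter.Tendsto.smul ?_ ?_
    · exact ((tendsto_const_nhds.sub htend).inv₀ (by intro h; rw [sub_eq_zero] at h; linarith))
    · exact tendsto_const_nhds.sub (htend.smul_const x)
  exact hcomp.isClosed.mem_of_tendsto hcont (Filter.Eventually.of_forall fun k => (hmem k).2.2)

/-- two-point quasiconcavity -/
lemma min_weight_le {Z : Set V} (hconv : Convex ℝ Z) {y p q x : V} (hy : y ∈ Z)
    (hp : p ∈ Z) (hq : q ∈ Z) {θ : ℝ} (h0 : 0 ≤ θ) (h1 : θ ≤ 1)
    (hx : x = (1 - θ) • q + θ • p) :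
    min (weight Z y p) (weight Z y q) ≤ weight Z y x := by
  have hxZ : x ∈ Z := hx ▸ hconv hq hp (by linarith) h0 (by ring)
  by_contra hcon
  push_neg at hcon
  set t : ℝ := (weight Z y x + min (weight Z y p) (weight Z y q)) / 2 with htdef
  have hx0 : 0 ≤ weight Z y x := weight_nonneg hy x
  have hm0 : 0 ≤ min (weight Z y p) (weight Z y q) :=
    le_min (weight_nonneg hy p) (weight_nonneg hy q)
  have ht0 : 0 ≤ t := by rw [htdef]; linarith
  have htx : weight Z y x < t := by rw [htdef]; linarith
  have htp : t < weight Z y p := by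
    have := min_le_left (weight Z y p) (weight Z y q); rw [htdef]; linarith
  have htq : t < weight Z y q := by
    have := min_le_right (weight Z y p) (weight Z y q); rw [htdef]; linarith
  obtain ⟨_, htp1, hpz⟩ := lt_weight_mem hconv hp ht0 htp
  obtain ⟨_, _, hqz⟩ := lt_weight_mem hconv hq ht0 htq
  have h1t : (0:ℝ) < 1 - t := by linarith
  have key : (1 - t)⁻¹ • (y - t • x)
      = (1 - θ) • ((1 - t)⁻¹ • (y - t • q)) + θ • ((1 - t)⁻¹ • (y - t • p)) := by
    rw [hx]; match_scalars <;> ring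
  have : t ∈ wset Z y x := ⟨ht0, htp1, by rw [key]; exact hconv hqz hpz (by linarith) h0 (by ring)⟩
  have := le_csSup (bddAbove_wset Z y x) this
  rw [← weight_eq] at this
  linarith

/-- Metric characterization of the intrinsic interior. -/
lemma mem_intrinsicInterior_iff_ball {s : Set V} {w : V} :
    w ∈ intrinsicInterior ℝ s ↔
      w ∈ affineSpan ℝ s ∧ ∃ δ > 0, ∀ v : V, v ∈ affineSpan ℝ s → dist v w < δ → v ∈ s := by
  rw [mem_intrinsicInterior]
  constructor
  · rintro ⟨p, hp, rfl⟩
    refine ⟨p.2, ?_⟩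
    rw [mem_interior_iff_mem_nhds, Metric.mem_nhds_iff] at hp
    obtain ⟨δ, hδ, hball⟩ := hp
    refine ⟨δ, hδ, fun v hv hdist => ?_⟩
    have : (⟨v, hv⟩ : affineSpan ℝ s) ∈ Metric.ball p δ := by
      rw [Metric.mem_ball, Subtype.dist_eq]
      exact hdist
    exact hball this
  · rintro ⟨hw, δ, hδ, h⟩
    refine ⟨⟨w, hw⟩, ?_, rfl⟩
    rw [mem_interior_iff_mem_nhds, Metric.mem_nhds_iff]
    refine ⟨δ, hδ, fun v hv => ?_⟩
    rw [Metric.mem_ball, Subtype.dist_eq] at hv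
    exact h v.1 v.2 hv

/-- A strict convex combination of an intrinsic interior point and a member is in the
intrinsic interior. -/
lemma combo_mem_intrinsicInterior {s : Set V} (hconv : Convex ℝ s) {c z : V}
    (hc : c ∈ intrinsicInterior ℝ s) (hz : z ∈ s) {θ : ℝ} (h0 : 0 < θ) (h1 : θ ≤ 1) :
    θ • c + (1 - θ) • z ∈ intrinsicInterior ℝ s := by
  rw [mem_intrinsicInterior_iff_ball] at hc ⊢
  obtain ⟨hcspan, δ, hδ, hball⟩ := hc
  have hzspan : z ∈ affineSpan ℝ s := subset_affineSpan ℝ s hz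
  constructor
  · have : θ • c + (1 - θ) • z = AffineMap.lineMap z c θ := by
      rw [AffineMap.lineMap_apply_module]; module
    rw [this]
    exact AffineMap.lineMap_mem θ hzspan hcspan
  · refine ⟨θ * δ, by positivity, fun v hv hdist => ?_⟩
    set c' : V := θ⁻¹ • (v - (θ • c + (1 - θ) • z)) + c with hc'
    have hc'span : c' ∈ affineSpan ℝ s := by
      have : c' = AffineMap.lineMap z v θ⁻¹ := by
        rw [AffineMap.lineMap_apply_module, hc']
        match_scalars <;> (field_simp; try ring)
      rw [this]
      exact AffineMap.lineMap_mem _ hzspan hv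
    have hc'dist : dist c' c < δ := by
      rw [dist_eq_norm, hc']
      simp only [add_sub_cancel_right]
      rw [norm_smul, norm_inv, Real.norm_eq_abs, abs_of_pos h0]
      rw [dist_eq_norm] at hdist
      calc θ⁻¹ * ‖v - (θ • c + (1 - θ) • z)‖ < θ⁻¹ * (θ * δ) := by
            apply mul_lt_mul_of_pos_left hdist (by positivity)
        _ = δ := by field_simp
    have hc'mem : c' ∈ s := hball c' hc'span hc'dist
    have : v = θ • c' + (1 - θ) • z := by
      rw [hc']; match_scalars <;> (field_simp; try ring)
    rw [this]
    exact hconv hc'mem hz h0.le (by linarith) (by ring)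

lemma y_mem_intrinsicInterior {Z : Set V} (hconv : Convex ℝ Z) {y : V} (hy : y ∈ Z)
    (hinner : ∀ x ∈ Z, weight Z y x ≠ 0) : y ∈ intrinsicInterior ℝ Z := by
  obtain ⟨c, hc⟩ := Set.Nonempty.intrinsicInterior hconv ⟨y, hy⟩
  have hcZ : c ∈ Z := intrinsicInterior_subset hc
  have hwc : 0 < weight Z y c := lt_of_le_of_ne (weight_nonneg hy c) (Ne.symm (hinner c hcZ))
  have hne : (wset Z y c).Nonempty := ⟨0, zero_mem_wset hy c⟩
  obtain ⟨t, htmem, htpos⟩ := exists_lt_of_lt_csSup hne (weight_eq Z y c ▸ hwc)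
  obtain ⟨-, ht1, htz⟩ := htmem
  have hkey : y = t • c + (1 - t) • ((1 - t)⁻¹ • (y - t • c)) := by
    have h1t : (1:ℝ) - t ≠ 0 := by linarith
    match_scalars <;> (field_simp; try ring)
  rw [hkey]
  exact combo_mem_intrinsicInterior hconv hc htz htpos ht1.le

/-- lower semicontinuity core -/
lemma wset_of_close {Z : Set V} (hconv : Convex ℝ Z) (hcomp : IsCompact Z) {y : V}
    (hy : y ∈ Z) (hinner : ∀ x ∈ Z, weight Z y x ≠ 0) {x₀ : V} (hx0 : x₀ ∈ Z)
    {t' : ℝ} (h0 : 0 ≤ t') (ht' : t' < weight Z y x₀) :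
    ∃ δ > 0, ∀ x ∈ Z, dist x x₀ < δ → t' ∈ wset Z y x := by
  rcases eq_or_lt_of_le h0 with h0' | h0'
  · exact ⟨1, one_pos, fun x hx _ => h0' ▸ zero_mem_wset hy x⟩
  have hyint := y_mem_intrinsicInterior hconv hy hinner
  have ht'1 : t' < 1 := lt_of_lt_of_le ht' (weight_le_one hy x₀)
  have h1t' : (0:ℝ) < 1 - t' := by linarith
  have hw' : (1 - t')⁻¹ • (y - t' • x₀) ∈ intrinsicInterior ℝ Z := by
    by_cases hxy : x₀ = y
    · have : (1 - t')⁻¹ • (y - t' • x₀) = y := by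
        subst hxy; match_scalars; field_simp
      rw [this]; exact hyint
    · set t := weight Z y x₀ with htdef
      have htlt1 : t < 1 := weight_lt_one hcomp hy hxy
      have htpos : 0 < t := lt_of_le_of_lt h0 ht'
      have hz := weight_attain hconv hcomp hy hx0 htlt1
      set α : ℝ := (t - t') / (t * (1 - t')) with hαdef
      have hα0 : 0 < α := div_pos (by linarith) (by positivity)
      have hα1 : α ≤ 1 := by
        rw [div_le_one (by positivity)]; nlinarith
      have key : (1 - t')⁻¹ • (y - t' • x₀)
          = α • y + (1 - α) • ((1 - t)⁻¹ • (y - t • x₀)) := by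
        have h1 : (t:ℝ) ≠ 0 := ne_of_gt htpos
        have h2 : (1:ℝ) - t ≠ 0 := by linarith
        have h3 : (1:ℝ) - t' ≠ 0 := by linarith
        rw [hαdef]
        match_scalars <;> (field_simp; try ring)
      rw [key]
      exact combo_mem_intrinsicInterior hconv hyint hz hα0 hα1
  rw [mem_intrinsicInterior_iff_ball] at hw'
  obtain ⟨-, δ', hδ', hball⟩ := hw'
  refine ⟨δ' * (1 - t') / t', by positivity, fun x hx hdist => ?_⟩
  set v : V := (1 - t')⁻¹ • (y - t' • x) with hvdef
  have hvspan : v ∈ affineSpan ℝ Z := by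
    have : v = AffineMap.lineMap x y (1 - t')⁻¹ := by
      rw [AffineMap.lineMap_apply_module, hvdef]
      match_scalars <;> (field_simp; try ring)
    rw [this]
    exact AffineMap.lineMap_mem _ (subset_affineSpan ℝ Z hx) (subset_affineSpan ℝ Z hy)
  have hvdist : dist v ((1 - t')⁻¹ • (y - t' • x₀)) < δ' := by
    rw [dist_eq_norm]
    have : v - (1 - t')⁻¹ • (y - t' • x₀) = (t' / (1 - t')) • (x₀ - x) := by
      rw [hvdef]; match_scalars <;> (field_simp; try ring)
    rw [this, norm_smul, Real.norm_eq_abs, abs_of_pos (by positivity : (0:ℝ) < t' / (1 - t'))]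
    rw [dist_eq_norm] at hdist
    have hnorm : ‖x₀ - x‖ = ‖x - x₀‖ := norm_sub_rev _ _
    rw [hnorm]
    calc t' / (1 - t') * ‖x - x₀‖ < t' / (1 - t') * (δ' * (1 - t') / t') :=
          mul_lt_mul_of_pos_left hdist (by positivity)
      _ = δ' := by field_simp
  exact ⟨h0, ht'1, hball v hvspan hvdist⟩

/-- the infimum of the weight is attained on `Z` -/
lemma exists_weight_eq_bdness {Z : Set V} (hconv : Convex ℝ Z) (hcomp : IsCompact Z) {y : V}
    (hy : y ∈ Z) (hinner : ∀ x ∈ Z, weight Z y x ≠ 0) :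
    ∃ x₀ ∈ Z, weight Z y x₀ = bdness Z y := by
  have hne : (weight Z y '' Z).Nonempty := ⟨weight Z y y, Set.mem_image_of_mem _ hy⟩
  have hbdd : BddBelow (weight Z y '' Z) := by
    refine ⟨0, ?_⟩
    rintro _ ⟨x, hx, rfl⟩
    exact weight_nonneg hy x
  obtain ⟨u, -, hutend, humem⟩ := exists_seq_tendsto_sInf hne hbdd
  have hbnn : 0 ≤ sInf (weight Z y '' Z) := le_csInf hne (by rintro _ ⟨x, hx, rfl⟩; exact weight_nonneg hy x)
  choose x hxZ hxw using fun k => (Set.mem_image _ _ _).1 (humem k)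
  obtain ⟨x₀, hx₀Z, φ, hφ, htend⟩ := hcomp.tendsto_subseq hxZ
  set b : ℝ := sInf (weight Z y '' Z) with hbdef
  have hwt : Filter.Tendsto (fun k => weight Z y (x (φ k))) Filter.atTop (nhds b) := by
    have := hutend.comp hφ.tendsto_atTop
    refine this.congr fun k => ?_
    simp [Function.comp, hxw]
  have hle : weight Z y x₀ ≤ b := by
    by_contra h
    push_neg at h
    set t' : ℝ := (b + weight Z y x₀) / 2 with ht'def
    have h0 : 0 ≤ t' := by rw [ht'def]; linarith
    have ht' : t' < weight Z y x₀ := by rw [ht'def]; linarith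
    obtain ⟨δ, hδ, hball⟩ := wset_of_close hconv hcomp hy hinner hx₀Z h0 ht'
    obtain ⟨N, hN⟩ := Metric.tendsto_atTop.1 htend δ hδ
    have hev : ∀ᶠ k in Filter.atTop, t' ≤ weight Z y (x (φ k)) := by
      refine Filter.eventually_atTop.2 ⟨N, fun k hk => ?_⟩
      have := hball _ (hxZ (φ k)) (hN k hk)
      exact le_csSup (bddAbove_wset Z y (x (φ k))) this
    have := ge_of_tendsto hwt hev
    rw [ht'def] at this
    linarith
  exact ⟨x₀, hx₀Z, le_antisymm hle (csInf_le hbdd (Set.mem_image_of_mem _ hx₀Z))⟩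

/-- At a point `r` of `F` from which one cannot move in direction `u ∈ vectorSpan F`,
there is a proper exposed face of `F` containing `r`. -/
lemma exists_face {F : Set V} (hFcomp : IsCompact F) (hFconv : Convex ℝ F) {r u : V}
    (hr : r ∈ F) (huD : u ∈ vectorSpan ℝ F)
    (hray : ∀ ε : ℝ, 0 < ε → r + ε • u ∉ F) :
    ∃ G : Set V, IsExtreme ℝ F G ∧ IsCompact G ∧ Convex ℝ G ∧ r ∈ G ∧
      Module.finrank ℝ (vectorSpan ℝ G) < Module.finrank ℝ (vectorSpan ℝ F) := by
  classical
  set D : Submodule ℝ V := vectorSpan ℝ F with hD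
  -- separating functionals
  have hp : ∀ k : ℕ, r + ((k:ℝ)+1)⁻¹ • u ∉ F := fun k => hray _ (by positivity)
  choose l s hl hls using fun k =>
    geometric_hahn_banach_closed_point hFconv hFcomp.isClosed (hp k)
  set a : ℕ → V := fun k => (InnerProductSpace.toDual ℝ (EuclideanSpace ℝ (Fin n))).symm (l k)
      with ha
  have hainner : ∀ k (z : V), ⟪a k, z⟫ = l k z := fun k z =>
    InnerProductSpace.toDual_symm_apply
  set b : ℕ → V := fun k => (D.orthogonalProjectionOnto (a k) : V) with hb
  have hbD : ∀ k, b k ∈ D := fun k => SetLike.coe_mem _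
  have hproj : ∀ k, ∀ d ∈ D, ⟪a k, d⟫ = ⟪b k, d⟫ := by
    intro k d hd
    have horth := Submodule.sub_starProjection_mem_orthogonal (K := D) (a k)
    have := (Submodule.mem_orthogonal _ _).1 horth d hd
    have h2 : ⟪a k - b k, d⟫ = 0 := by rwa [real_inner_comm]
    rw [inner_sub_left] at h2
    linarith
  have hkey : ∀ k, ∀ z ∈ F, ⟪b k, z - r⟫ < ((k:ℝ)+1)⁻¹ * ⟪b k, u⟫ := by
    intro k z hz
    have h1 : l k z < l k (r + ((k:ℝ)+1)⁻¹ • u) := lt_trans (hl k z hz) (hls k)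
    rw [map_add, map_smul, smul_eq_mul] at h1
    have hzr : z - r ∈ D := by
      have := vsub_mem_vectorSpan ℝ hz hr
      rwa [vsub_eq_sub] at this
    have e1 : ⟪b k, z - r⟫ = l k z - l k r := by
      rw [← hproj k _ hzr, inner_sub_right, hainner, hainner]
    have e2 : ⟪b k, u⟫ = l k u := by rw [← hproj k _ huD, hainner]
    rw [e1, e2]
    linarith
  have hbu : ∀ k, 0 < ⟪b k, u⟫ := by
    intro k
    have := hkey k r hr
    simp only [sub_self, inner_zero_right] at this
    nlinarith [inv_pos.2 (by positivity : (0:ℝ) < (k:ℝ)+1)]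
  have hbne : ∀ k, b k ≠ 0 := by
    intro k h
    have := hbu k
    rw [h, inner_zero_left] at this
    linarith
  set c : ℕ → V := fun k => ‖b k‖⁻¹ • b k with hc
  have hcnorm : ∀ k, ‖c k‖ = 1 := fun k => norm_smul_inv_norm (hbne k)
  have hckey : ∀ k, ∀ z ∈ F, ⟪c k, z - r⟫ < ((k:ℝ)+1)⁻¹ * ‖u‖ := by
    intro k z hz
    have hbpos : (0:ℝ) < ‖b k‖⁻¹ := by
      have := norm_pos_iff.2 (hbne k); positivity
    have h1 : ⟪c k, z - r⟫ = ‖b k‖⁻¹ * ⟪b k, z - r⟫ := real_inner_smul_left _ _ _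
    have h2 : ⟪c k, u⟫ = ‖b k‖⁻¹ * ⟪b k, u⟫ := real_inner_smul_left _ _ _
    have h3 : ⟪c k, u⟫ ≤ ‖u‖ := by
      calc ⟪c k, u⟫ ≤ ‖c k‖ * ‖u‖ := real_inner_le_norm _ _
        _ = ‖u‖ := by rw [hcnorm k, one_mul]
    have h4 := hkey k z hz
    have h5 : ⟪c k, z - r⟫ < ((k:ℝ)+1)⁻¹ * ⟪c k, u⟫ := by
      rw [h1, h2]
      calc ‖b k‖⁻¹ * ⟪b k, z - r⟫ < ‖b k‖⁻¹ * (((k:ℝ)+1)⁻¹ * ⟪b k, u⟫) :=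
            mul_lt_mul_of_pos_left h4 hbpos
        _ = ((k:ℝ)+1)⁻¹ * (‖b k‖⁻¹ * ⟪b k, u⟫) := by ring
    have h6 : (0:ℝ) < ((k:ℝ)+1)⁻¹ := by positivity
    nlinarith
  -- pass to a limit
  have hcmem : ∀ k, c k ∈ Metric.sphere (0:V) 1 ∩ (D : Set V) := by
    intro k
    refine ⟨?_, ?_⟩
    · rw [mem_sphere_zero_iff_norm]; exact hcnorm k
    · exact D.smul_mem _ (hbD k)
  have hKcomp : IsCompact (Metric.sphere (0:V) 1 ∩ (D : Set V)) :=
    (isCompact_sphere 0 1).inter_right (Submodule.closed_of_finiteDimensional D)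
  obtain ⟨c₀, hc₀K, φ, hφ, htend⟩ := hKcomp.tendsto_subseq hcmem
  have hc₀norm : ‖c₀‖ = 1 := mem_sphere_zero_iff_norm.1 hc₀K.1
  have hc₀D : c₀ ∈ D := hc₀K.2
  have hle : ∀ z ∈ F, ⟪c₀, z - r⟫ ≤ 0 := by
    intro z hz
    have h1 : Filter.Tendsto (fun k => ⟪c (φ k), z - r⟫) Filter.atTop (nhds ⟪c₀, z - r⟫) :=
      htend.inner tendsto_const_nhds
    have h2 : Filter.Tendsto (fun k : ℕ => ((k:ℝ)+1)⁻¹ * ‖u‖) Filter.atTop (nhds 0) := by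
      have := tendsto_one_div_add_atTop_nhds_zero_nat (𝕜 := ℝ)
      have h3 := this.mul_const ‖u‖
      rw [zero_mul] at h3
      refine h3.congr fun k => ?_
      rw [one_div]
    refine le_of_tendsto_of_tendsto' h1 h2 fun k => ?_
    have h4 := hckey (φ k) z hz
    have h5 : ((φ k : ℝ)+1)⁻¹ ≤ ((k:ℝ)+1)⁻¹ := by
      apply inv_anti₀ (by positivity)
      have := hφ.le_apply (x := k)
      exact_mod_cast by exact_mod_cast add_le_add_left (Nat.cast_le.2 this) 1
    nlinarith [norm_nonneg u, mul_le_mul_of_nonneg_right h5 (norm_nonneg u)]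
  -- the face
  set G : Set V := {x ∈ F | ∀ z ∈ F, (innerSL ℝ c₀) z ≤ (innerSL ℝ c₀) x} with hG
  have hexp : IsExposed ℝ F G := fun _ => ⟨innerSL ℝ c₀, rfl⟩
  have hrG : r ∈ G := by
    refine ⟨hr, fun z hz => ?_⟩
    have := hle z hz
    rw [inner_sub_right] at this
    simpa [innerSL_apply_apply] using this
  have hGF : G ⊆ F := fun x hx => hx.1
  refine ⟨G, hexp.isExtreme, hFcomp.of_isClosed_subset (hexp.isClosed hFcomp.isClosed) hGF,
    hexp.convex hFconv, hrG, ?_⟩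
  -- rank drop
  set W : Submodule ℝ V := D ⊓ LinearMap.ker ((innerSL ℝ c₀ : V →L[ℝ] ℝ) : V →ₗ[ℝ] ℝ) with hW
  have hGW : vectorSpan ℝ G ≤ W := by
    rw [vectorSpan_def, Submodule.span_le]
    rintro v hv
    rw [Set.mem_vsub] at hv
    obtain ⟨g₁, hg₁, g₂, hg₂, rfl⟩ := hv
    have hgg : ⟪c₀, g₁ - g₂⟫ = 0 := by
      have h1 := hg₁.2 g₂ (hGF hg₂)
      have h2 := hg₂.2 g₁ (hGF hg₁)
      simp only [innerSL_apply_apply] at h1 h2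
      rw [inner_sub_right]
      linarith
    refine ⟨?_, ?_⟩
    · have := vsub_mem_vectorSpan ℝ (hGF hg₁) (hGF hg₂)
      rwa [vsub_eq_sub] at this
    · rw [SetLike.mem_coe, LinearMap.mem_ker]
      rw [vsub_eq_sub]
      simpa [innerSL_apply_apply] using hgg
  have hWD : W < D := by
    refine lt_of_le_of_ne inf_le_left fun h => ?_
    have hc₀W : c₀ ∈ W := h ▸ hc₀D
    obtain ⟨-, h2⟩ := Submodule.mem_inf.1 hc₀W
    have h3 : ⟪c₀, c₀⟫ = (0:ℝ) := by simpa [innerSL_apply_apply] using LinearMap.mem_ker.1 h2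
    rw [real_inner_self_eq_norm_sq, hc₀norm] at h3
    norm_num at h3
  calc Module.finrank ℝ (vectorSpan ℝ G) ≤ Module.finrank ℝ W := Submodule.finrank_mono hGW
    _ < Module.finrank ℝ D := Submodule.finrank_lt_finrank_of_lt hWD

lemma exists_extreme_le {Z : Set V} (hconv : Convex ℝ Z) (hcomp : IsCompact Z) {y : V}
    (hy : y ∈ Z) :
    ∀ d : ℕ, ∀ F : Set V, Module.finrank ℝ (vectorSpan ℝ F) < d → IsCompact F → Convex ℝ F →
      IsExtreme ℝ Z F → ∀ x ∈ F, ∃ e ∈ Set.extremePoints ℝ Z, weight Z y e ≤ weight Z y x := by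
  intro d
  induction d with
  | zero => intro F h; exact absurd h (Nat.not_lt_zero _)
  | succ d ih =>
    intro F hrank hFc hFcv hFZ x hx
    by_cases hsing : ∀ x' ∈ F, x' = x
    · have hFeq : F = {x} := Set.eq_singleton_iff_unique_mem.2 ⟨hx, hsing⟩
      rw [hFeq] at hFZ
      exact ⟨x, isExtreme_singleton.1 hFZ, le_refl _⟩
    by_cases hxe : x ∈ Set.extremePoints ℝ F
    · exact ⟨x, hFZ.extremePoints_subset_extremePoints hxe, le_refl _⟩
    rw [mem_extremePoints, not_and] at hxe
    have hxe' := hxe hx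
    push_neg at hxe'
    obtain ⟨x₁, hx₁, x₂, hx₂, hseg, hne⟩ := hxe'
    obtain ⟨α, β, hα, hβ, hαβ, hcombo⟩ := hseg
    have hx₁eq : α • x₁ = x - β • x₂ := by rw [← hcombo]; module
    have hx₂x : x₂ ≠ x := by
      intro heq
      have h1 : α • x₁ = α • x := by
        rw [hx₁eq, heq]
        match_scalars
        linarith
      exact hne (smul_right_injective V (ne_of_gt hα) h1) heq
    set w : V := x₂ - x with hw
    have hw0 : w ≠ 0 := by
      rw [hw, sub_ne_zero]; exact hx₂x
    have hwD : w ∈ vectorSpan ℝ F := by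
      have := vsub_mem_vectorSpan ℝ hx₂ hx
      rwa [vsub_eq_sub] at this
    set T : Set ℝ := {s : ℝ | x + s • w ∈ F} with hT
    have h0T : (0:ℝ) ∈ T := by simp [hT, hx]
    have h1T : (1:ℝ) ∈ T := by
      have hxw : x + (1:ℝ) • w = x₂ := by rw [hw]; module
      show x + (1:ℝ) • w ∈ F
      rw [hxw]; exact hx₂
    have hTne : T.Nonempty := ⟨0, h0T⟩
    obtain ⟨R, hR⟩ := hFc.isBounded.subset_closedBall 0
    have hTbdd : ∀ s ∈ T, |s| ≤ (|R| + ‖x‖) / ‖w‖ := by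
      intro s hs
      have h1 : ‖x + s • w‖ ≤ |R| := by
        have := hR hs
        simp only [Metric.mem_closedBall, dist_zero_right] at this
        exact le_trans this (le_abs_self R)
      have h2 : ‖s • w‖ ≤ |R| + ‖x‖ := by
        have : s • w = (x + s • w) - x := by abel
        rw [this]
        refine le_trans (norm_sub_le _ _) (by linarith)
      rw [norm_smul, Real.norm_eq_abs] at h2
      rw [le_div_iff₀ (norm_pos_iff.2 hw0)]
      exact h2
    have hTabove : BddAbove T := ⟨(|R| + ‖x‖) / ‖w‖, fun s hs =>
      le_trans (le_abs_self s) (hTbdd s hs)⟩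
    have hTbelow : BddBelow T := ⟨-((|R| + ‖x‖) / ‖w‖), fun s hs => by
      have := hTbdd s hs
      have := neg_abs_le s
      linarith⟩
    have hTclosed : IsClosed T := by
      have : T = (fun s : ℝ => x + s • w) ⁻¹' F := rfl
      rw [this]
      exact hFc.isClosed.preimage (continuous_const.add (continuous_id.smul continuous_const))
    set σ : ℝ := sSup T with hσ
    set τ : ℝ := sInf T with hτ
    have hσT : σ ∈ T := hTclosed.csSup_mem hTne hTabove
    have hτT : τ ∈ T := hTclosed.csInf_mem hTne hTbelow
    have hσ1 : 1 ≤ σ := le_csSup hTabove h1T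
    have hs₁T : -(β/α) ∈ T := by
      have hαne : α ≠ 0 := ne_of_gt hα
      have key : α • (x + (-(β/α)) • w) = α • x₁ := by
        rw [hx₁eq, hw]
        match_scalars <;> (field_simp; try linarith)
      have hpt : x + (-(β/α)) • w = x₁ := smul_right_injective V hαne key
      show x + (-(β/α)) • w ∈ F
      rw [hpt]; exact hx₁
    have hτneg : τ < 0 := by
      have h1 : τ ≤ -(β/α) := csInf_le hTbelow hs₁T
      have : 0 < β/α := by positivity
      linarith
    set p : V := x + σ • w with hp
    set q : V := x + τ • w with hq
    have hpF : p ∈ F := hσT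
    have hqF : q ∈ F := hτT
    have hp_ray : ∀ ε : ℝ, 0 < ε → p + ε • w ∉ F := by
      intro ε hε hmem
      have : σ + ε ∈ T := by
        simp only [hT, Set.mem_setOf_eq]
        have : x + (σ + ε) • w = p + ε • w := by rw [hp]; module
        rw [this]; exact hmem
      have := le_csSup hTabove this
      linarith
    have hq_ray : ∀ ε : ℝ, 0 < ε → q + ε • (-w) ∉ F := by
      intro ε hε hmem
      have : τ - ε ∈ T := by
        simp only [hT, Set.mem_setOf_eq]
        have : x + (τ - ε) • w = q + ε • (-w) := by rw [hq]; module
        rw [this]; exact hmem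
      have := csInf_le hTbelow this
      linarith
    set θ : ℝ := (-τ)/(σ - τ) with hθ
    have hστ : 0 < σ - τ := by linarith
    have hθ0 : 0 ≤ θ := by
      rw [hθ]; exact div_nonneg (by linarith) (by linarith)
    have hθ1 : θ ≤ 1 := by
      rw [hθ, div_le_one hστ]; linarith
    have hne' : σ - τ ≠ 0 := ne_of_gt hστ
    have hxcombo : x = (1 - θ) • q + θ • p := by
      rw [hq, hp, hθ]
      match_scalars <;> (field_simp; try ring)
    have hmin := min_weight_le hconv hy (hFZ.1 hpF) (hFZ.1 hqF) hθ0 hθ1 hxcombo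
    -- pick the endpoint with smaller weight
    obtain ⟨r, hrF, hu, huD, hray, hwr⟩ :
        ∃ r, r ∈ F ∧ ∃ u, u ∈ vectorSpan ℝ F ∧ (∀ ε : ℝ, 0 < ε → r + ε • u ∉ F) ∧
          weight Z y r ≤ weight Z y x := by
      rcases le_total (weight Z y p) (weight Z y q) with hpq | hpq
      · refine ⟨p, hpF, w, hwD, hp_ray, ?_⟩
        rw [min_eq_left hpq] at hmin
        exact hmin
      · refine ⟨q, hqF, -w, Submodule.neg_mem _ hwD, hq_ray, ?_⟩
        rw [min_eq_right hpq] at hmin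
        exact hmin
    obtain ⟨G, hGext, hGc, hGcv, hrG, hGrank⟩ := exists_face hFc hFcv hrF huD hray
    obtain ⟨e, heE, hle⟩ := ih G (lt_of_lt_of_le hGrank (Nat.lt_succ_iff.1 hrank)) hGc hGcv
      (hFZ.trans hGext) r hrG
    exact ⟨e, heE, le_trans hle hwr⟩

theorem bdness_attained_at_extreme_point' {Z : Set V} (hconv : Convex ℝ Z)
    (hcomp : IsCompact Z) {y : V} (hy : y ∈ Z)
    (hinner : ∀ x ∈ Z, weight Z y x ≠ 0) :
    ∃ x ∈ Set.extremePoints ℝ Z, bdness Z y = weight Z y x := by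
  obtain ⟨x₀, hx₀Z, hw₀⟩ := exists_weight_eq_bdness hconv hcomp hy hinner
  obtain ⟨e, heE, hle⟩ := exists_extreme_le hconv hcomp hy
    (Module.finrank ℝ (vectorSpan ℝ Z) + 1) Z (Nat.lt_succ_self _) hcomp hconv
    IsExtreme.rfl x₀ hx₀Z
  refine ⟨e, heE, ?_⟩
  have hbdd : BddBelow (weight Z y '' Z) := by
    refine ⟨0, ?_⟩
    rintro _ ⟨x, hx, rfl⟩
    exact weight_nonneg hy x
  have h1 : bdness Z y ≤ weight Z y e :=
    csInf_le hbdd (Set.mem_image_of_mem _ (extremePoints_subset heE))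
  have h2 : weight Z y e ≤ bdness Z y := hw₀ ▸ hle
  linarith

end BD

theorem bdness_attained_at_extreme_point {n : ℕ}
    (Z : Set (EuclideanSpace ℝ (Fin n))) (hconv : Convex ℝ Z) (hcomp : IsCompact Z)
    (y : EuclideanSpace ℝ (Fin n)) (hy : y ∈ Z)
    (hinner : ∀ x ∈ Z, weight Z y x ≠ 0) :
    ∃ x ∈ Set.extremePoints ℝ Z, bdness Z y = weight Z y x :=
  BD.bdness_attained_at_extreme_point' hconv hcomp hy hinner
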